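/- Let L be the lower-bidiagonal matrix with 1 on the diagonal and 1,2,3,... on the subdiagonal, Δ the matrix with 1 on the superdiagonal and zeroes elsewhere, and U_x = Δ + xI. Then LΔ + I = ΔL, and consequently LU_x + I = U_x L; hence the Laguerre production matrix with λ = 1 satisfies P = L(LU_x + I) = L U_x L. -/

import Mathlib

/-- Row-finite infinite matrices: each row is a finitely supported function. -/
def RFMat (R : Type*) [Zero R] := ℕ → (ℕ →₀ R)

namespace RFMat

variable {R : Type*} [CommRing R]

/-- Matrix product of row-finite matrices: `(P*Q)_{ik} = ∑_j P_{ij} Q_{jk}`. -/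
noncomputable def mul (P Q : RFMat R) : RFMat R :=
  fun i => (P i).sum fun j a => a • Q j

end RFMat

open Polynomial

/-- The lower-bidiagonal matrix `L` with `1` on the diagonal and `1,2,3,…` on
the subdiagonal, over `ℤ[x]`. -/
noncomputable def Lmat : RFMat (Polynomial ℤ) :=
  fun n => Finsupp.single n 1 + Finsupp.single (n - 1) (n : Polynomial ℤ)

/-- The shift matrix `Δ`, with `1` on the superdiagonal and `0` elsewhere. -/
noncomputable def Dmat : RFMat (Polynomial ℤ) :=
  fun n => Finsupp.single (n + 1) 1

/-- The upper-bidiagonal matrix `U_x = Δ + xI`, with `1` on the superdiagonal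
and `x` on the diagonal. -/
noncomputable def Uxmat : RFMat (Polynomial ℤ) :=
  fun n => Finsupp.single (n + 1) 1 + Finsupp.single n X

/-- The quadridiagonal univariate Laguerre production matrix with `λ = 1`:
`p_{n,n+1} = 1`, `p_{n,n} = 2n+1+x`, `p_{n,n-1} = n·n+2nx`,
`p_{n,n-2} = n(n-1)x`. -/
noncomputable def Pone : RFMat (Polynomial ℤ) :=
  fun n => Finsupp.single (n + 1) 1
    + Finsupp.single n (2 * (n : Polynomial ℤ) + 1 + X)
    + Finsupp.single (n - 1) ((n : Polynomial ℤ) * (n : Polynomial ℤ)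
        + 2 * (n : Polynomial ℤ) * X)
    + Finsupp.single (n - 2) ((n : Polynomial ℤ) * ((n : Polynomial ℤ) - 1) * X)

lemma sum2 (j j' : ℕ) (a b : Polynomial ℤ) (Q : ℕ → ℕ →₀ Polynomial ℤ) :
    ((Finsupp.single j a + Finsupp.single j' b).sum fun j c => c • Q j)
      = a • Q j + b • Q j' := by
  rw [Finsupp.sum_add_index' (by simp) (by intros; rw [add_smul])]
  simp [Finsupp.sum_single_index]

lemma mulL (Q : RFMat (Polynomial ℤ)) (n : ℕ) :
    RFMat.mul Lmat Q n = Q n + (n : Polynomial ℤ) • Q (n - 1) := by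
  show ((Finsupp.single n 1 + Finsupp.single (n-1) (n : Polynomial ℤ)).sum fun j a => a • Q j) = _
  exact (sum2 _ _ _ _ Q).trans (congrArg (· + _) (one_smul _ _))

lemma mulD (Q : RFMat (Polynomial ℤ)) (n : ℕ) :
    RFMat.mul Dmat Q n = Q (n + 1) := by
  show ((Finsupp.single (n+1) (1 : Polynomial ℤ)).sum fun j a => a • Q j) = _
  rw [Finsupp.sum_single_index (by simp), one_smul]

lemma mulU (Q : RFMat (Polynomial ℤ)) (n : ℕ) :
    RFMat.mul Uxmat Q n = Q (n + 1) + (X : Polynomial ℤ) • Q n := by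
  show ((Finsupp.single (n+1) 1 + Finsupp.single n (X : Polynomial ℤ)).sum fun j a => a • Q j) = _
  exact (sum2 _ _ _ _ Q).trans (congrArg (· + _) (one_smul _ _))

lemma part1 : (fun n => RFMat.mul Lmat Dmat n + Finsupp.single n (1 : Polynomial ℤ))
        = RFMat.mul Dmat Lmat := by
  funext n
  rw [mulL, mulD]
  cases n with
  | zero =>
    ext k
    simp [Lmat, Dmat, smul_add, Finsupp.smul_single, Finsupp.single_apply]
  | succ p =>
    ext k
    simp only [Lmat, Dmat, Nat.add_sub_cancel, smul_add, Finsupp.smul_single, smul_eq_mul, mul_one,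
      Finsupp.add_apply, Finsupp.single_apply, Finsupp.coe_add, Pi.add_apply, Finsupp.coe_smul, Pi.smul_apply]
    split_ifs <;> push_cast <;> first | ring | omega | (exfalso; omega)

lemma part2 : (fun n => RFMat.mul Lmat Uxmat n + Finsupp.single n (1 : Polynomial ℤ))
        = RFMat.mul Uxmat Lmat := by
  funext n
  rw [mulL, mulU]
  cases n with
  | zero =>
    ext k
    simp [Lmat, Uxmat, smul_add, Finsupp.smul_single, Finsupp.single_apply]
    split_ifs <;> push_cast <;> first | ring | omega | (exfalso; omega)
  | succ p =>
    ext k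
    simp only [Lmat, Uxmat, Nat.add_sub_cancel, smul_add, Finsupp.smul_single, smul_eq_mul, mul_one,
      Finsupp.add_apply, Finsupp.single_apply, Finsupp.coe_add, Pi.add_apply, Finsupp.coe_smul, Pi.smul_apply]
    split_ifs <;> push_cast <;> first | ring | omega | (exfalso; omega)

lemma part4 : Pone = RFMat.mul Lmat (RFMat.mul Uxmat Lmat) := by
  funext n
  rw [mulL, mulU, mulU]
  match n with
  | 0 =>
    ext k
    simp [Lmat, Pone, smul_add, Finsupp.smul_single, Finsupp.single_apply]
    split_ifs <;> push_cast <;> first | ring | omega | (exfalso; omega)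
  | 1 =>
    ext k : 1
    simp only [Lmat, Pone, show 1-1 = 0 from rfl, show 1-2 = 0 from rfl, Nat.cast_one,
      Nat.cast_zero, smul_add, Finsupp.smul_single, smul_eq_mul, mul_one,
      Finsupp.add_apply, Finsupp.single_apply, Finsupp.coe_add, Pi.add_apply]
    split_ifs <;> push_cast <;> first | ring | (exfalso; omega)
  | (p+2) =>
    ext k
    simp only [Lmat, Pone, Nat.add_sub_cancel, show p+2-1 = p+1 from rfl,
      show p+2-2 = p from rfl, show p+1-1 = p from rfl, smul_add, Finsupp.smul_single, smul_eq_mul, mul_one,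
      Finsupp.add_apply, Finsupp.single_apply, Finsupp.coe_add, Pi.add_apply, Finsupp.coe_smul, Pi.smul_apply]
    split_ifs <;> push_cast <;> first | ring | omega | (exfalso; omega)

/-- `LΔ + I = ΔL`, hence `LU_x + I = U_x L`, and hence the
Laguerre production matrix with `λ = 1` satisfies
`P = L(LU_x + I) = L U_x L`. -/
theorem LDelta_commutation_and_Pone_factorization :
    (fun n => RFMat.mul Lmat Dmat n + Finsupp.single n (1 : Polynomial ℤ))
        = RFMat.mul Dmat Lmat ∧
    (fun n => RFMat.mul Lmat Uxmat n + Finsupp.single n (1 : Polynomial ℤ))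
        = RFMat.mul Uxmat Lmat ∧
    Pone = RFMat.mul Lmat
        (fun n => RFMat.mul Lmat Uxmat n + Finsupp.single n (1 : Polynomial ℤ)) ∧
    Pone = RFMat.mul Lmat (RFMat.mul Uxmat Lmat) := by
  refine ⟨part1, part2, ?_, part4⟩
  rw [part2]; exact part4
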